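/- Let K be an N×N real matrix such that (-1)^{|J|} det(K - 1_J) ≥ 0 for all subsets J of {1,...,N}. Then the numbers p_J := (-1)^{|J̄|} det(K - 1_{J̄}) define a probability mass function on subsets of {1,...,N} (they are nonnegative and sum to 1), and the random subset Y with P[Y = J] = p_J satisfies P[J ⊆ Y] = det(K_J) for all J. -/

import Mathlib

open Matrix BigOperators

/-- Principal minor of `K` indexed by the subset `J`. -/
def pm {N : ℕ} (K : Matrix (Fin N) (Fin N) ℝ) (J : Finset (Fin N)) : ℝ :=
  (K.submatrix (fun i : J => (i : Fin N)) (fun j : J => (j : Fin N))).det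

/-- Diagonal 0/1 matrix supported on `J`. -/
def ind {N : ℕ} (J : Finset (Fin N)) : Matrix (Fin N) (Fin N) ℝ :=
  Matrix.diagonal (fun i => if i ∈ J then (1 : ℝ) else 0)

/-- det of K with rows off U replaced by standard basis rows equals principal minor. -/
lemma detB {N : ℕ} (K : Matrix (Fin N) (Fin N) ℝ) (U : Finset (Fin N)) :
    (Matrix.of (fun i j => if i ∈ U then K i j else if i = j then (1:ℝ) else 0)).det
      = pm K U := by
  classical
  set M' : Matrix (Fin N) (Fin N) ℝ :=
    Matrix.of (fun i j => if i ∈ U then K i j else if i = j then (1:ℝ) else 0) with hM'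
  let e : {x : Fin N // x ∈ U} ⊕ {x : Fin N // ¬ x ∈ U} ≃ Fin N := Equiv.sumCompl (· ∈ U)
  have h := Matrix.det_submatrix_equiv_self e M'
  have hblock : M'.submatrix e e =
      Matrix.fromBlocks
        (K.submatrix (fun i : {x : Fin N // x ∈ U} => (i : Fin N))
          (fun j : {x : Fin N // x ∈ U} => (j : Fin N)))
        (K.submatrix (fun i : {x : Fin N // x ∈ U} => (i : Fin N))
          (fun j : {x : Fin N // ¬ x ∈ U} => (j : Fin N)))
        0 1 := by
    ext i j
    cases i with
    | inl i =>
      cases j with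
      | inl j => simp [M', e, i.2]
      | inr j => simp [M', e, i.2]
    | inr i =>
      cases j with
      | inl j =>
        have : (i : Fin N) ≠ (j : Fin N) := by
          intro hij
          exact i.2 (hij ▸ j.2)
        simp [M', e, i.2, this]
      | inr j =>
        simp [M', e, i.2, Matrix.one_apply, Subtype.ext_iff]
  rw [← h, hblock, Matrix.det_fromBlocks_zero₂₁, Matrix.det_one, mul_one]
  rfl

lemma detA {N : ℕ} (K : Matrix (Fin N) (Fin N) ℝ) (S : Finset (Fin N)) :
    (K - ind Sᶜ).det =
      ∑ U ∈ Finset.univ.filter (fun U : Finset (Fin N) => S ⊆ U),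
        (-1:ℝ) ^ (Uᶜ.card) * pm K U := by
  classical
  have h0 : K - ind Sᶜ = (fun i => K i) + (fun i => (-(ind Sᶜ)) i) := by
    funext i j; simp [sub_eq_add_neg]
  have h1 : (K - ind Sᶜ).det
      = Matrix.detRowAlternating.toMultilinearMap
          ((fun i => K i) + (fun i => (-(ind Sᶜ)) i)) := by
    rw [h0]; rfl
  rw [h1, MultilinearMap.map_add_univ (Matrix.detRowAlternating).toMultilinearMap]
  rw [← Finset.sum_filter_add_sum_filter_not Finset.univ (fun U : Finset (Fin N) => S ⊆ U)]
  have hz : ∑ U ∈ Finset.univ.filter (fun U : Finset (Fin N) => ¬ S ⊆ U),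
      Matrix.detRowAlternating.toMultilinearMap
        (U.piecewise (fun i => K i) (fun i => (-(ind Sᶜ)) i)) = 0 := by
    apply Finset.sum_eq_zero
    intro U hU
    simp only [Finset.mem_filter] at hU
    obtain ⟨i, hiS, hiU⟩ := Finset.not_subset.mp hU.2
    apply MultilinearMap.map_coord_zero _ (i := i)
    rw [Finset.piecewise_eq_of_notMem _ _ _ hiU]
    funext j
    simp [ind, Matrix.diagonal, Finset.mem_compl, hiS]
  rw [hz, add_zero]
  apply Finset.sum_congr rfl
  intro U hU
  simp only [Finset.mem_filter] at hU
  have hSU : S ⊆ U := hU.2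
  set M' : Matrix (Fin N) (Fin N) ℝ :=
    Matrix.of (fun i j => if i ∈ U then K i j else if i = j then (1:ℝ) else 0) with hM'
  have key : U.piecewise (fun i => K i) (fun i => (-(ind Sᶜ)) i)
      = Uᶜ.piecewise (fun i => (-1:ℝ) • M' i) (fun i => M' i) := by
    funext i
    by_cases hi : i ∈ U
    · rw [Finset.piecewise_eq_of_mem _ _ _ hi,
        Finset.piecewise_eq_of_notMem _ _ _ (by simpa using hi)]
      funext j; simp [M', hi]
    · rw [Finset.piecewise_eq_of_notMem _ _ _ hi,
        Finset.piecewise_eq_of_mem _ _ _ (by simpa using hi)]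
      have hiS' : i ∉ S := fun h => hi (hSU h)
      funext j
      by_cases hij : i = j
      · subst hij; simp [M', ind, Matrix.diagonal, hi, Finset.mem_compl, hiS']
      · simp [M', ind, Matrix.diagonal, hij, hi]
  rw [key, MultilinearMap.map_piecewise_smul (Matrix.detRowAlternating.toMultilinearMap) (fun _ => (-1:ℝ)) (fun i => M' i), Finset.prod_const]
  have hdet : Matrix.detRowAlternating.toMultilinearMap (fun i => M' i) = pm K U := by
    show M'.det = pm K U
    rw [hM']; exact detB K U
  rw [hdet, smul_eq_mul]

lemma lemC {N : ℕ} (J U : Finset (Fin N)) :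
    (∑ S : Finset (Fin N),
        if J ⊆ S ∧ S ⊆ U then (-1:ℝ) ^ (Sᶜ.card) else 0)
      = if U = J then (-1:ℝ) ^ (Jᶜ.card) else 0 := by
  classical
  by_cases hJU : J ⊆ U
  · have hR : ∑ T ∈ (U \ J).powerset, (-1:ℝ) ^ T.card
        = if U \ J = ∅ then 1 else 0 := by
      calc ∑ T ∈ (U \ J).powerset, (-1:ℝ) ^ T.card
          = ((∑ T ∈ (U \ J).powerset, (-1:ℤ) ^ T.card : ℤ) : ℝ) := by
            push_cast; rfl
        _ = ((if U \ J = ∅ then (1:ℤ) else 0 : ℤ) : ℝ) := by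
            rw [Finset.sum_powerset_neg_one_pow_card]
        _ = if U \ J = ∅ then 1 else 0 := by split <;> simp
    have hmain : (∑ S : Finset (Fin N),
        if J ⊆ S ∧ S ⊆ U then (-1:ℝ) ^ (Sᶜ.card) else 0)
        = (-1:ℝ) ^ (Jᶜ.card) * (if U \ J = ∅ then 1 else 0) := by
      rw [← Finset.sum_filter, ← hR, Finset.mul_sum]
      apply Finset.sum_bij' (fun S _ => S \ J) (fun T _ => J ∪ T)
      · intro S hS
        simp only [Finset.mem_filter, Finset.mem_univ, true_and] at hS
        exact Finset.mem_powerset.mpr (Finset.sdiff_subset_sdiff hS.2 (Finset.Subset.refl J))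
      · intro T hT
        simp only [Finset.mem_powerset] at hT
        simp only [Finset.mem_filter, Finset.mem_univ, true_and]
        exact ⟨Finset.subset_union_left,
          Finset.union_subset hJU (hT.trans Finset.sdiff_subset)⟩
      · intro S hS
        simp only [Finset.mem_filter, Finset.mem_univ, true_and] at hS
        exact Finset.union_sdiff_of_subset hS.1
      · intro T hT
        simp only [Finset.mem_powerset] at hT
        have hd : Disjoint J T :=
          (Finset.disjoint_of_subset_left hT Finset.sdiff_disjoint).symm
        exact Finset.union_sdiff_cancel_left hd
      · intro S hS
        simp only [Finset.mem_filter, Finset.mem_univ, true_and] at hS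
        have hsub : S \ J ⊆ Jᶜ := by
          intro x hx
          simp only [Finset.mem_sdiff] at hx
          simpa [Finset.mem_compl] using hx.2
        have hcc : (Jᶜ \ (S \ J)).card + (S \ J).card = Jᶜ.card :=
          Finset.card_sdiff_add_card_eq_card hsub
        have heq : Jᶜ \ (S \ J) = Sᶜ := by
          ext x
          have hJx : x ∈ J → x ∈ S := fun h => hS.1 h
          simp only [Finset.mem_sdiff, Finset.mem_compl]
          tauto
        rw [heq] at hcc
        rw [← hcc, pow_add, mul_assoc, ← pow_add, Even.neg_one_pow ⟨_, rfl⟩, mul_one]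
    rw [hmain]
    by_cases hUJ : U = J
    · rw [if_pos hUJ, if_pos (by simp [hUJ]), mul_one]
    · rw [if_neg hUJ, if_neg, mul_zero]
      intro h
      exact hUJ (Finset.Subset.antisymm
        ((Finset.sdiff_eq_empty_iff_subset).mp h) hJU)
  · rw [Finset.sum_eq_zero, if_neg]
    · intro hUJ; exact hJU (hUJ ▸ Finset.Subset.refl J)
    · intro S _
      rw [if_neg]
      rintro ⟨h1, h2⟩; exact hJU (h1.trans h2)

theorem stmt_2 {N : ℕ} (K : Matrix (Fin N) (Fin N) ℝ)
    (hadm : ∀ J : Finset (Fin N), 0 ≤ (-1 : ℝ) ^ J.card * (K - ind J).det) :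
    (∀ J : Finset (Fin N), 0 ≤ (-1 : ℝ) ^ (Jᶜ.card) * (K - ind Jᶜ).det) ∧
    (∑ J : Finset (Fin N), (-1 : ℝ) ^ (Jᶜ.card) * (K - ind Jᶜ).det = 1) ∧
    (∀ J : Finset (Fin N),
      ∑ S ∈ Finset.univ.filter (fun S : Finset (Fin N) => J ⊆ S),
        (-1 : ℝ) ^ (Sᶜ.card) * (K - ind Sᶜ).det = pm K J) := by
  classical
  have part3 : ∀ J : Finset (Fin N),
      ∑ S ∈ Finset.univ.filter (fun S : Finset (Fin N) => J ⊆ S),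
        (-1 : ℝ) ^ (Sᶜ.card) * (K - ind Sᶜ).det = pm K J := by
    intro J
    calc ∑ S ∈ Finset.univ.filter (fun S : Finset (Fin N) => J ⊆ S),
          (-1 : ℝ) ^ (Sᶜ.card) * (K - ind Sᶜ).det
        = ∑ S : Finset (Fin N), ∑ U : Finset (Fin N),
            (if J ⊆ S ∧ S ⊆ U then (-1:ℝ) ^ (Sᶜ.card) else 0)
              * ((-1:ℝ) ^ (Uᶜ.card) * pm K U) := by
          rw [Finset.sum_filter]
          apply Finset.sum_congr rfl
          intro S _
          by_cases hJS : J ⊆ S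
          · rw [if_pos hJS, detA, Finset.mul_sum, Finset.sum_filter]
            apply Finset.sum_congr rfl
            intro U _
            by_cases hSU : S ⊆ U <;> simp [hJS, hSU, mul_assoc]
          · rw [if_neg hJS]
            symm; apply Finset.sum_eq_zero
            intro U _; simp [hJS]
      _ = ∑ U : Finset (Fin N),
            (∑ S : Finset (Fin N),
              if J ⊆ S ∧ S ⊆ U then (-1:ℝ) ^ (Sᶜ.card) else 0)
              * ((-1:ℝ) ^ (Uᶜ.card) * pm K U) := by
          rw [Finset.sum_comm]
          apply Finset.sum_congr rfl
          intro U _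
          rw [Finset.sum_mul]
      _ = pm K J := by
          simp only [lemC]
          rw [Finset.sum_eq_single J]
          · rw [if_pos rfl, ← mul_assoc, ← pow_add,
              Even.neg_one_pow ⟨_, rfl⟩, one_mul]
          · intro U _ hU; rw [if_neg hU, zero_mul]
          · intro h; exact absurd (Finset.mem_univ J) h
  refine ⟨fun J => hadm Jᶜ, ?_, part3⟩
  have := part3 ∅
  rw [Finset.filter_true_of_mem (fun S _ => Finset.empty_subset S)] at this
  rw [this]
  simp [pm]
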